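/- Let p : Y → Z be a quandle covering (a surjective quandle homomorphism such that p(x̃) = p(ỹ) implies ã◁x̃ = ã◁ỹ for all ã, x̃, ỹ ∈ Y). Then the induced group homomorphism p_* : As(Y) → As(Z) is surjective and its kernel is contained in the center of As(Y). -/

import Mathlib

/-- A quandle in the convention of the paper. -/
class PQuandle (X : Type*) where
  op : X → X → X
  op_self : ∀ a : X, op a a = a
  op_bij : ∀ a : X, Function.Bijective (fun x => op x a)
  op_distrib : ∀ a b c : X, op (op a b) c = op (op a c) (op b c)

infixl:65 " ◁ " => PQuandle.op

namespace PQuandle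

variable {X : Type*} [PQuandle X]

/-- The `n`-fold right operation `x ◁ⁿ y`. -/
def opn (x : X) (n : ℕ) (y : X) : X := (fun z => z ◁ y)^[n] x

/-- The right translation `(· ◁ y)` as a permutation of `X`. -/
noncomputable def act (y : X) : Equiv.Perm X := Equiv.ofBijective _ (op_bij y)

@[simp] lemma act_apply (y x : X) : act y x = x ◁ y := rfl

/-- The inner automorphism group `Inn(X)`. -/
noncomputable def Inn (X : Type*) [PQuandle X] : Subgroup (Equiv.Perm X) :=
  Subgroup.closure (Set.range (act (X := X)))

/-- The relators `e_{x ◁ y}⁻¹ e_y⁻¹ e_x e_y` of the adjoint group. -/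
def adjRels (X : Type*) [PQuandle X] : Set (FreeGroup X) :=
  { r | ∃ x y : X,
      r = (FreeGroup.of (x ◁ y))⁻¹ * (FreeGroup.of y)⁻¹ * FreeGroup.of x * FreeGroup.of y }

/-- The adjoint (enveloping) group `As(X)` of the quandle `X`. -/
def Adj (X : Type*) [PQuandle X] : Type _ := PresentedGroup (adjRels X)

instance : Group (Adj X) := by unfold Adj; infer_instance

/-- The generator `e_x` of `As(X)`. -/
def gen (x : X) : Adj X := PresentedGroup.of x

lemma gen_rel (x y : X) : gen (x ◁ y) = (gen y)⁻¹ * gen x * gen y := by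
  have h : ((FreeGroup.of (x ◁ y))⁻¹ * (FreeGroup.of y)⁻¹ * FreeGroup.of x * FreeGroup.of y :
      FreeGroup X) ∈ Subgroup.normalClosure (adjRels X) :=
    Subgroup.subset_normalClosure ⟨x, y, rfl⟩
  have h2 : ((gen (x ◁ y))⁻¹ * (gen y)⁻¹ * gen x * gen y : Adj X) = 1 := by
    have := (QuotientGroup.eq_one_iff
      (((FreeGroup.of (x ◁ y))⁻¹ * (FreeGroup.of y)⁻¹ * FreeGroup.of x * FreeGroup.of y :
        FreeGroup X))).mpr h
    exact this
  calc gen (x ◁ y)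
      = gen (x ◁ y) * ((gen (x ◁ y))⁻¹ * (gen y)⁻¹ * gen x * gen y) := by rw [h2, mul_one]
    _ = (gen y)⁻¹ * gen x * gen y := by group

lemma act_mul_act (x y : X) : act y * act x = act (x ◁ y) * act y := by
  ext z
  simp only [Equiv.Perm.mul_apply, act_apply]
  exact op_distrib z x y

/-- The homomorphism `As(X) → Perm(X)` sending `e_y` to the inverse of the right
translation by `y`; it encodes the right action of `As(X)` on `X`. -/
noncomputable def innHom : Adj X →* Equiv.Perm X :=
  PresentedGroup.toGroup (f := fun y : X => (act y)⁻¹) (by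
    rintro r ⟨x, y, rfl⟩
    simp only [map_mul, map_inv, FreeGroup.lift_apply_of, inv_inv]
    have := act_mul_act x y
    calc act (x ◁ y) * act y * (act x)⁻¹ * (act y)⁻¹
        = (act y * act x) * (act x)⁻¹ * (act y)⁻¹ := by rw [this]
      _ = 1 := by group)

@[simp] lemma innHom_gen (y : X) : innHom (gen y) = (act y)⁻¹ :=
  PresentedGroup.toGroup.of _

/-- The right action of `As(X)` on `X`: `x · g`. -/
noncomputable def ract (x : X) (g : Adj X) : X := (innHom g)⁻¹ x

@[simp] lemma ract_gen (x y : X) : ract x (gen y) = x ◁ y := by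
  simp [ract]

lemma ract_mul (x : X) (g h : Adj X) : ract x (g * h) = ract (ract x g) h := by
  simp [ract, map_mul]

/-- A quandle is connected if the right action of `As(X)` on `X` is transitive. -/
def Connected (X : Type*) [PQuandle X] : Prop :=
  ∀ x y : X, ∃ g : Adj X, ract x g = y

/-- The homomorphism `ε : As(X) → ℤ` sending every generator `e_x` to `1`. -/
def eps : Adj X →* Multiplicative ℤ :=
  PresentedGroup.toGroup (f := fun _ : X => Multiplicative.ofAdd 1) (by
    rintro r ⟨x, y, rfl⟩
    simp only [map_mul, map_inv, FreeGroup.lift_apply_of]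
    group)

@[simp] lemma eps_gen (x : X) : eps (gen x) = Multiplicative.ofAdd 1 :=
  PresentedGroup.toGroup.of _

/-- The underlying set of the universal covering quandle: `Ker ε`. -/
def covOp (a : X) (g h : (eps (X := X)).ker) : (eps (X := X)).ker :=
  ⟨(gen a)⁻¹ * g.1 * (h.1)⁻¹ * gen a * h.1, by
    have hg : eps g.1 = 1 := g.2
    have hh : eps h.1 = 1 := h.2
    simp only [MonoidHom.mem_ker, map_mul, map_inv, hg, hh]
    group⟩

/-- `n`-fold covering operation. -/
def covOpn (a : X) (g : (eps (X := X)).ker) (n : ℕ) (h : (eps (X := X)).ker) :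
    (eps (X := X)).ker := (fun u => covOp a u h)^[n] g

/-- The right translation of the covering quandle as a permutation. -/
def covAct (a : X) (h : (eps (X := X)).ker) : Equiv.Perm (eps (X := X)).ker where
  toFun g := covOp a g h
  invFun g := ⟨gen a * g.1 * (h.1)⁻¹ * (gen a)⁻¹ * h.1, by
    have hg : eps g.1 = 1 := g.2
    have hh : eps h.1 = 1 := h.2
    simp only [MonoidHom.mem_ker, map_mul, map_inv, hg, hh]
    group⟩
  left_inv g := by
    apply Subtype.ext
    simp only [covOp]
    group
  right_inv g := by
    apply Subtype.ext
    simp only [covOp]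
    group

end PQuandle

open PQuandle in
/-- The homomorphism `As(Y) → As(Z)` induced by a quandle homomorphism. -/
def adjMap {Y Z : Type*} [PQuandle Y] [PQuandle Z] (p : Y → Z)
    (hp : ∀ a b : Y, p (a ◁ b) = p a ◁ p b) : PQuandle.Adj Y →* PQuandle.Adj Z :=
  PresentedGroup.toGroup (f := fun y => PQuandle.gen (p y)) (by
    rintro r ⟨x, y, rfl⟩
    simp only [map_mul, map_inv, FreeGroup.lift_apply_of]
    rw [hp, PQuandle.gen_rel]
    group)

namespace PQuandle

variable {X : Type*} [PQuandle X]

/-- Induction principle for the adjoint group. -/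
lemma adj_induction {P : Adj X → Prop} (h1 : P 1) (hgen : ∀ x : X, P (gen x))
    (hinv : ∀ x : X, P (gen x)⁻¹) (hmul : ∀ g h : Adj X, P g → P h → P (g * h)) :
    ∀ g : Adj X, P g := by
  intro g
  induction g using QuotientGroup.induction_on with
  | H w =>
    induction w using FreeGroup.induction_on with
    | C1 => exact h1
    | of x => exact hgen x
    | inv_of x _ => exact hinv x
    | mul a b ha hb => exact hmul _ _ ha hb

lemma conj_gen (g : Adj X) : ∀ x : X, g⁻¹ * gen x * g = gen (ract x g) := by
  induction g using adj_induction with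
  | h1 => intro x; simp [ract]
  | hgen y => intro x; rw [ract_gen, gen_rel]
  | hinv y =>
    intro x
    have h1 : ract x (gen y)⁻¹ ◁ y = x := by
      show act y (ract x (gen y)⁻¹) = x
      simp [ract]
    have := gen_rel (ract x (gen y)⁻¹) y
    rw [h1] at this
    rw [this]; group
  | hmul a b ha hb =>
    intro x
    rw [ract_mul, ← hb, ← ha]
    group

lemma mem_center_of_comm_gen {g : Adj X} (h : ∀ x : X, gen x * g = g * gen x) :
    g ∈ Subgroup.center (Adj X) := by
  rw [Subgroup.mem_center_iff]
  intro z
  induction z using adj_induction with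
  | h1 => simp
  | hgen x => exact h x
  | hinv x =>
    have := h x
    calc (gen x)⁻¹ * g = (gen x)⁻¹ * (g * gen x) * (gen x)⁻¹ := by group
      _ = (gen x)⁻¹ * (gen x * g) * (gen x)⁻¹ := by rw [← this]
      _ = g * (gen x)⁻¹ := by group
  | hmul a b ha hb =>
    calc a * b * g = a * (b * g) := by group
      _ = a * g * b := by rw [hb]; group
      _ = g * a * b := by rw [ha]
      _ = g * (a * b) := by group

end PQuandle

open PQuandle in
/-- The action of `As(Z)` on `Y` induced by a covering. -/
noncomputable def covInnHom {Y Z : Type*} [PQuandle Y] [PQuandle Z] (p : Y → Z)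
    (hp : ∀ a b : Y, p (a ◁ b) = p a ◁ p b) (hsurj : Function.Surjective p)
    (hcov : ∀ a x y : Y, p x = p y → a ◁ x = a ◁ y) : Adj Z →* Equiv.Perm Y :=
  PresentedGroup.toGroup (f := fun z : Z => (act (Function.surjInv hsurj z))⁻¹) (by
    have hact : ∀ a b : Y, p a = p b → act a = act b := by
      intro a b hab
      ext z
      exact hcov z a b hab
    rintro r ⟨z1, z2, rfl⟩
    simp only [map_mul, map_inv, FreeGroup.lift_apply_of, inv_inv]
    set c := Function.surjInv hsurj
    have hc : ∀ z : Z, p (c z) = z := Function.surjInv_eq hsurj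
    have key : act (c (z1 ◁ z2)) = act (c z1 ◁ c z2) := by
      apply hact
      rw [hp, hc, hc, hc]
    rw [key]
    have := act_mul_act (c z1) (c z2)
    calc act (c z1 ◁ c z2) * act (c z2) * (act (c z1))⁻¹ * (act (c z2))⁻¹
        = (act (c z2) * act (c z1)) * (act (c z1))⁻¹ * (act (c z2))⁻¹ := by rw [this]
      _ = 1 := by group)

open PQuandle in
lemma covInnHom_comp {Y Z : Type*} [PQuandle Y] [PQuandle Z] (p : Y → Z)
    (hp : ∀ a b : Y, p (a ◁ b) = p a ◁ p b) (hsurj : Function.Surjective p)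
    (hcov : ∀ a x y : Y, p x = p y → a ◁ x = a ◁ y) (g : Adj Y) :
    covInnHom p hp hsurj hcov (adjMap p hp g) = innHom g := by
  induction g using adj_induction with
  | h1 => simp
  | hgen y =>
    have h1 : adjMap p hp (gen y) = gen (p y) := PresentedGroup.toGroup.of _
    have h2 : covInnHom p hp hsurj hcov (gen (p y)) =
        (act (Function.surjInv hsurj (p y)))⁻¹ := PresentedGroup.toGroup.of _
    have h3 : act (Function.surjInv hsurj (p y)) = act y := by
      ext z
      exact hcov z _ y (Function.surjInv_eq hsurj (p y))
    rw [h1, h2, h3, innHom_gen]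
  | hinv y =>
    have h1 : adjMap p hp (gen y) = gen (p y) := PresentedGroup.toGroup.of _
    have h2 : covInnHom p hp hsurj hcov (gen (p y)) =
        (act (Function.surjInv hsurj (p y)))⁻¹ := PresentedGroup.toGroup.of _
    have h3 : act (Function.surjInv hsurj (p y)) = act y := by
      ext z
      exact hcov z _ y (Function.surjInv_eq hsurj (p y))
    rw [map_inv, map_inv, h1, h2, h3, map_inv, innHom_gen]
  | hmul a b ha hb =>
    rw [map_mul, map_mul, map_mul, ha, hb]

open PQuandle in
/-- For a quandle covering `p : Y → Z`, the induced map `p_* : As(Y) → As(Z)` is surjective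
with central kernel. -/
theorem stmt11 {Y Z : Type*} [PQuandle Y] [PQuandle Z] (p : Y → Z)
    (hp : ∀ a b : Y, p (a ◁ b) = p a ◁ p b) (hsurj : Function.Surjective p)
    (hcov : ∀ a x y : Y, p x = p y → a ◁ x = a ◁ y) :
    Function.Surjective (adjMap p hp) ∧
      (adjMap p hp).ker ≤ Subgroup.center (Adj Y) := by
  constructor
  · intro h
    induction h using adj_induction with
    | h1 => exact ⟨1, map_one _⟩
    | hgen z =>
      obtain ⟨y, rfl⟩ := hsurj z
      exact ⟨gen y, PresentedGroup.toGroup.of _⟩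
    | hinv z =>
      obtain ⟨y, rfl⟩ := hsurj z
      refine ⟨(gen y)⁻¹, ?_⟩
      have h1 : adjMap p hp (gen y) = gen (p y) := PresentedGroup.toGroup.of _
      rw [map_inv, h1]
    | hmul a b ha hb =>
      obtain ⟨ga, hga⟩ := ha
      obtain ⟨gb, hgb⟩ := hb
      exact ⟨ga * gb, by rw [map_mul, hga, hgb]⟩
  · intro g hg
    have hg1 : adjMap p hp g = 1 := hg
    have hinn : innHom g = 1 := by
      rw [← covInnHom_comp p hp hsurj hcov g, hg1, map_one]
    have hract : ∀ x : Y, ract x g = x := by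
      intro x
      simp [ract, hinn]
    apply mem_center_of_comm_gen
    intro x
    have := conj_gen g x
    rw [hract x] at this
    calc gen x * g = g * (g⁻¹ * gen x * g) := by group
      _ = g * gen x := by rw [this]
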